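/- Let q ≥ 1 be an integer and let β be a real number such that β + h/q is not a nonpositive integer for any h ∈ {0, 1, …, q−1}. Then for every real x, −∑_{k=0}^∞ ψ(k/q + β) x^k / Γ(k/q + β) = −∑_{h=0}^{q−1} (x^h / Γ(h/q + β)) · [ ψ(h/q + β) + Q(h/q + β, x^q) ], where Q(a, y) = ∑_{k=1}^∞ y^k ψ(k + a)/(a)_k. (This is Theorem 5.1: the reduction formula for the derivative of the two-parameter Mittag-Leffler function with respect to β at α = 1/q.) -/

import Mathlib

open scoped BigOperators

/-- The digamma function `ψ(x) = Γ'(x)/Γ(x)`. -/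
noncomputable def digamma (x : ℝ) : ℝ := deriv Real.Gamma x / Real.Gamma x

/-- `Q(a, y) = ∑_{k=1}^∞ y^k ψ(k + a) / (a)_k`, with `(a)_k` the Pochhammer symbol. -/
noncomputable def Q (a y : ℝ) : ℝ :=
  ∑' k : ℕ, y ^ (k + 1) * digamma (((k : ℝ) + 1) + a) / (ascPochhammer ℝ (k + 1)).eval a

section Aux

lemma shift_ne {a : ℝ} (ha : ∀ n : ℕ, a ≠ -n) (m : ℕ) : ∀ n : ℕ, (m : ℝ) + a ≠ -n := by
  intro n h
  apply ha (n + m)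
  push_cast
  linarith

lemma add_nat_ne_zero {a : ℝ} (ha : ∀ n : ℕ, a ≠ -n) (m : ℕ) : a + (m : ℝ) ≠ 0 := by
  intro h
  apply ha m
  linarith

lemma digamma_add_one {x : ℝ} (hx : ∀ n : ℕ, x ≠ -n) :
    digamma (x + 1) = digamma x + 1 / x := by
  have hx0 : x ≠ 0 := by simpa using hx 0
  have hx1 : ∀ n : ℕ, x + 1 ≠ -(n : ℝ) := by
    intro n h
    apply hx (n + 1)
    push_cast
    linarith
  have hdx : DifferentiableAt ℝ Real.Gamma x := Real.differentiableAt_Gamma hx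
  have hdx1 : DifferentiableAt ℝ Real.Gamma (x + 1) := Real.differentiableAt_Gamma hx1
  have h1 : HasDerivAt (fun y => Real.Gamma (y + 1)) (deriv Real.Gamma (x + 1)) x := by
    have := hdx1.hasDerivAt.comp x ((hasDerivAt_id x).add_const 1)
    rw [mul_one] at this
    exact this
  have h2 : HasDerivAt (fun y => y * Real.Gamma y)
      (1 * Real.Gamma x + x * deriv Real.Gamma x) x :=
    (hasDerivAt_id x).mul hdx.hasDerivAt
  have heq : (fun y => Real.Gamma (y + 1)) =ᶠ[nhds x] fun y => y * Real.Gamma y := by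
    filter_upwards [isOpen_ne.mem_nhds hx0] with y hy using Real.Gamma_add_one hy
  have h3 : HasDerivAt (fun y => Real.Gamma (y + 1))
      (1 * Real.Gamma x + x * deriv Real.Gamma x) x :=
    h2.congr_of_eventuallyEq heq
  have hder : deriv Real.Gamma (x + 1) = Real.Gamma x + x * deriv Real.Gamma x := by
    have := h1.unique h3
    linarith [this]
  have hG : Real.Gamma x ≠ 0 := Real.Gamma_ne_zero hx
  rw [digamma, digamma, hder, Real.Gamma_add_one hx0]
  field_simp
  ring

lemma asc_eval_ne {a : ℝ} (ha : ∀ n : ℕ, a ≠ -n) (m : ℕ) :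
    (ascPochhammer ℝ m).eval a ≠ 0 := by
  induction m with
  | zero => simp
  | succ n ih =>
    rw [ascPochhammer_succ_right]
    simp only [Polynomial.eval_mul, Polynomial.eval_add, Polynomial.eval_X,
      Polynomial.eval_natCast]
    exact mul_ne_zero ih (add_nat_ne_zero ha n)

lemma Gamma_nat_add {a : ℝ} (ha : ∀ n : ℕ, a ≠ -n) (m : ℕ) :
    Real.Gamma ((m : ℝ) + a) = (ascPochhammer ℝ m).eval a * Real.Gamma a := by
  induction m with
  | zero => simp
  | succ n ih =>
    have h1 : ((n + 1 : ℕ) : ℝ) + a = ((n : ℝ) + a) + 1 := by push_cast; ring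
    have h2 : ((n : ℝ) + a) ≠ 0 := by
      intro h
      apply ha n
      linarith
    rw [h1, Real.Gamma_add_one h2, ih, ascPochhammer_succ_right]
    simp only [Polynomial.eval_mul, Polynomial.eval_add, Polynomial.eval_X,
      Polynomial.eval_natCast]
    ring

lemma summable_g {a : ℝ} (ha : ∀ n : ℕ, a ≠ -n) (y : ℝ) :
    Summable (fun m : ℕ => y ^ m * digamma ((m : ℝ) + a) / (ascPochhammer ℝ m).eval a) := by
  obtain ⟨i0, hi0⟩ := exists_nat_ge (1 - a)
  set c : ℝ := 1 + ∑ j ∈ Finset.range i0, 1 / |a + (j : ℝ)| with hc_def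
  have hsum_nonneg : 0 ≤ ∑ j ∈ Finset.range i0, 1 / |a + (j : ℝ)| :=
    Finset.sum_nonneg fun j _ => by positivity
  have hc1 : 1 ≤ c := by rw [hc_def]; linarith
  have hc0 : 0 < c := by linarith
  have hc : ∀ i : ℕ, 1 / |a + (i : ℝ)| ≤ c := by
    intro i
    by_cases hi : i < i0
    · have h1 : 1 / |a + (i : ℝ)| ≤ ∑ j ∈ Finset.range i0, 1 / |a + (j : ℝ)| :=
        Finset.single_le_sum (f := fun j : ℕ => 1 / |a + (j : ℝ)|)
          (fun j _ => by positivity) (Finset.mem_range.mpr hi)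
      linarith
    · have hii : (i0 : ℝ) ≤ i := by exact_mod_cast not_lt.mp hi
      have h1 : (1 : ℝ) ≤ a + i := by linarith
      rw [abs_of_pos (by linarith)]
      have : 1 / (a + (i : ℝ)) ≤ 1 := by
        rw [div_le_one (by linarith)]; linarith
      linarith
  set D : ℝ := |digamma a| + c with hD_def
  have hD : 0 < D := by positivity
  have hbound : ∀ m : ℕ, |digamma ((m : ℝ) + a)| ≤ D * (m + 1) := by
    have key : ∀ m : ℕ, |digamma ((m : ℝ) + a)| ≤ |digamma a| + c * m := by
      intro m
      induction m with
      | zero => simp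
      | succ n ih =>
        have h1 : ((n + 1 : ℕ) : ℝ) + a = ((n : ℝ) + a) + 1 := by push_cast; ring
        rw [h1, digamma_add_one (shift_ne ha n)]
        have h2 : |1 / ((n : ℝ) + a)| ≤ c := by
          rw [abs_div, abs_one]
          have : |(n : ℝ) + a| = |a + (n : ℝ)| := by rw [add_comm]
          rw [this]
          exact hc n
        calc |digamma ((n : ℝ) + a) + 1 / ((n : ℝ) + a)|
            ≤ |digamma ((n : ℝ) + a)| + |1 / ((n : ℝ) + a)| := abs_add_le _ _
          _ ≤ (|digamma a| + c * n) + c := add_le_add ih h2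
          _ = |digamma a| + c * ((n : ℕ) + 1 : ℕ) := by push_cast; ring
    intro m
    have h1 := key m
    have h2 : (0 : ℝ) ≤ m := Nat.cast_nonneg m
    have h3 : 0 ≤ |digamma a| := abs_nonneg _
    nlinarith
  set P : ℕ → ℝ := fun m => |(ascPochhammer ℝ m).eval a| with hP_def
  have hP : ∀ m, 0 < P m := fun m => abs_pos.mpr (asc_eval_ne ha m)
  have hPsucc : ∀ m : ℕ, P (m + 1) = P m * |a + (m : ℝ)| := by
    intro m
    rw [hP_def]
    simp only [ascPochhammer_succ_right, Polynomial.eval_mul, Polynomial.eval_add,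
      Polynomial.eval_X, Polynomial.eval_natCast, abs_mul]
  apply Summable.of_norm_bounded (g := fun m : ℕ => |y| ^ m * (D * (m + 1)) / P m)
  · apply summable_of_ratio_norm_eventually_le (r := 1 / 2) (by norm_num)
    obtain ⟨N, hN⟩ := exists_nat_ge (4 * |y| + 2 - a)
    filter_upwards [Filter.eventually_ge_atTop N] with m hm
    have hmN : (N : ℝ) ≤ m := by exact_mod_cast hm
    have ham : 4 * |y| + 2 ≤ a + m := by linarith
    have ham1 : (1 : ℝ) ≤ a + m := by
      have := abs_nonneg y
      linarith
    have habs : |a + (m : ℝ)| = a + m := abs_of_pos (by linarith)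
    have hGm1 : (0 : ℝ) ≤ |y| ^ (m + 1) * (D * ((m : ℝ) + 1 + 1)) / P (m + 1) :=
      div_nonneg (by positivity) (hP (m + 1)).le
    have hGm : (0 : ℝ) ≤ |y| ^ m * (D * ((m : ℝ) + 1)) / P m :=
      div_nonneg (by positivity) (hP m).le
    rw [Real.norm_eq_abs, Real.norm_eq_abs]
    push_cast
    rw [abs_of_nonneg hGm1, abs_of_nonneg hGm]
    have hkey : |y| * (D * ((m : ℝ) + 1 + 1)) ≤ 1 / 2 * (a + m) * (D * ((m : ℝ) + 1)) := by
      have h2 : (0 : ℝ) ≤ m := Nat.cast_nonneg m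
      nlinarith [mul_nonneg (mul_nonneg (sub_nonneg.mpr ham) hD.le)
          (by linarith : (0:ℝ) ≤ (m:ℝ) + 1),
        mul_nonneg (mul_nonneg hD.le (abs_nonneg y)) h2,
        mul_nonneg hD.le h2, hD.le]
    calc |y| ^ (m + 1) * (D * ((m : ℝ) + 1 + 1)) / P (m + 1)
        = (|y| ^ m / (P m * (a + m))) * (|y| * (D * ((m : ℝ) + 1 + 1))) := by
          rw [hPsucc m, habs, pow_succ]
          ring
      _ ≤ (|y| ^ m / (P m * (a + m))) * (1 / 2 * (a + m) * (D * ((m : ℝ) + 1))) := by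
          apply mul_le_mul_of_nonneg_left hkey
          have := (hP m).le
          positivity
      _ = 1 / 2 * (|y| ^ m * (D * ((m : ℝ) + 1)) / P m) := by
          have h1 : P m ≠ 0 := (hP m).ne'
          have h2 : a + (m : ℝ) ≠ 0 := by linarith
          field_simp
  · intro m
    rw [Real.norm_eq_abs, abs_div, abs_mul, abs_pow]
    have h1 := hbound m
    have h2 := hP m
    gcongr

end Aux

/-- **Theorem 5.1**: for an integer `q ≥ 1` and real `β` with `β + h/q` never a nonpositive
integer for `h ∈ {0,…,q−1}`, for every real `x`,
`−∑_{k=0}^∞ ψ(k/q + β) x^k/Γ(k/q + β)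
  = −∑_{h=0}^{q−1} (x^h/Γ(h/q + β)) [ψ(h/q + β) + Q(h/q + β, x^q)]`. -/
theorem mittagLeffler_beta_deriv_inv_nat (q : ℕ) (hq : 1 ≤ q) (β : ℝ)
    (hβ : ∀ h : ℕ, h < q → ∀ n : ℕ, β + (h : ℝ) / q ≠ -(n : ℝ)) (x : ℝ) :
    -∑' k : ℕ, digamma ((k : ℝ) / q + β) * x ^ k / Real.Gamma ((k : ℝ) / q + β) =
      -∑ h ∈ Finset.range q,
        x ^ h / Real.Gamma ((h : ℝ) / q + β) *
          (digamma ((h : ℝ) / q + β) + Q ((h : ℝ) / q + β) (x ^ q)) := by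
  have hq0 : 0 < q := hq
  have hqR : (q : ℝ) ≠ 0 := Nat.cast_ne_zero.mpr (by omega)
  set f : ℕ → ℝ := fun k => digamma ((k : ℝ) / q + β) * x ^ k / Real.Gamma ((k : ℝ) / q + β)
    with hf_def
  have hclass : ∀ h ∈ Finset.range q,
      HasSum (Set.indicator {n : ℕ | n % q = h} f)
        (x ^ h / Real.Gamma ((h : ℝ) / q + β) *
          (digamma ((h : ℝ) / q + β) + Q ((h : ℝ) / q + β) (x ^ q))) := by
    intro h hh
    have hhq : h < q := Finset.mem_range.mp hh
    have ha : ∀ n : ℕ, ((h : ℝ) / q + β) ≠ -(n : ℝ) := fun n hn =>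
      hβ h hhq n (by linarith)
    set a : ℝ := (h : ℝ) / q + β with ha_def
    have hGa : Real.Gamma a ≠ 0 := Real.Gamma_ne_zero ha
    have hinj : Function.Injective (fun m : ℕ => m * q + h) := by
      intro m1 m2 e
      simp only at e
      exact Nat.eq_of_mul_eq_mul_right hq0 (Nat.add_right_cancel e)
    have hzero : ∀ n : ℕ, n ∉ Set.range (fun m : ℕ => m * q + h) →
        Set.indicator {n : ℕ | n % q = h} f n = 0 := by
      intro n hn
      apply Set.indicator_of_notMem
      intro hmem
      apply hn
      refine ⟨n / q, ?_⟩
      have hmem' : n % q = h := hmem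
      dsimp only
      rw [← hmem']
      exact Nat.div_add_mod' n q
    rw [← hinj.hasSum_iff hzero]
    have hcomp : (Set.indicator {n : ℕ | n % q = h} f) ∘ (fun m : ℕ => m * q + h) =
        fun m : ℕ => f (m * q + h) := by
      funext m
      simp only [Function.comp_apply]
      exact Set.indicator_of_mem
        (show m * q + h ∈ {n : ℕ | n % q = h} from by
          show (m * q + h) % q = h
          rw [Nat.mul_comm, Nat.mul_add_mod]
          exact Nat.mod_eq_of_lt hhq) f
    rw [hcomp]
    have heq2 : (fun m : ℕ => f (m * q + h)) = fun m : ℕ =>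
        (x ^ h / Real.Gamma a) *
          ((x ^ q) ^ m * digamma ((m : ℝ) + a) / (ascPochhammer ℝ m).eval a) := by
      funext m
      have hc1 : ((m * q + h : ℕ) : ℝ) / q + β = (m : ℝ) + a := by
        rw [ha_def]
        push_cast
        field_simp
        ring
      simp only [hf_def, hc1]
      rw [Gamma_nat_add ha m, pow_add, pow_mul']
      have h2 := asc_eval_ne ha m
      field_simp
    rw [heq2]
    apply HasSum.mul_left
    have hs := summable_g ha (x ^ q)
    have h0 := hs.hasSum
    rw [hs.tsum_eq_zero_add] at h0
    simp only [pow_zero, Nat.cast_zero, zero_add, one_mul, ascPochhammer_zero,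
      Polynomial.eval_one, div_one] at h0
    push_cast at h0
    rw [Q]
    exact h0
  have htotal := hasSum_sum hclass
  have hcover : (fun k : ℕ => ∑ h ∈ Finset.range q,
      Set.indicator {n : ℕ | n % q = h} f k) = f := by
    funext k
    rw [Finset.sum_eq_single (k % q)]
    · exact Set.indicator_of_mem (show k ∈ {n | n % q = k % q} from rfl) f
    · intro b _ hb
      exact Set.indicator_of_notMem (fun hmem => hb ((Set.mem_setOf_eq ▸ hmem).symm)) f
    · intro hk
      exact absurd (Finset.mem_range.mpr (Nat.mod_lt k hq0)) hk
  rw [hcover] at htotal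
  rw [htotal.tsum_eq]
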